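/- Let φ: M → N be a Poisson map between oriented Poisson manifolds and fix volume forms μ on M and ν on N. Then the modular class mod(φ) ∈ H¹_π(φ) is represented by the vector field along φ given by X_{μ,ν} = dφ · X_μ − X_ν ∘ φ, where X_μ and X_ν are the modular vector fields of π_M and π_N relative to μ and ν. -/

import Mathlib

open scoped Manifold
local notation "∞" => (⊤ : ℕ∞)

noncomputable section

namespace PoissonPaper

variable {EM : Type*} [NormedAddCommGroup EM] [NormedSpace ℝ EM]
  {HM : Type*} [TopologicalSpace HM] {IM : ModelWithCorners ℝ EM HM}
  {M : Type*} [TopologicalSpace M] [ChartedSpace HM M]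
  {EN : Type*} [NormedAddCommGroup EN] [NormedSpace ℝ EN]
  {HN : Type*} [TopologicalSpace HN] {IN : ModelWithCorners ℝ EN HN}
  {N : Type*} [TopologicalSpace N] [ChartedSpace HN N]

/-- A Poisson structure on a manifold, given by a Poisson bracket on the commutative
ring of smooth real-valued functions: an ℝ-bilinear, antisymmetric bracket satisfying
the Leibniz rule and the Jacobi identity. -/
structure PoissonStructure
    {E : Type*} [NormedAddCommGroup E] [NormedSpace ℝ E]
    {H : Type*} [TopologicalSpace H] (I : ModelWithCorners ℝ E H)
    (M : Type*) [TopologicalSpace M] [ChartedSpace H M] : Type _ where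
  bracket : C^∞⟮I, M; ℝ⟯ → C^∞⟮I, M; ℝ⟯ → C^∞⟮I, M; ℝ⟯
  bracket_add_left : ∀ f g h, bracket (f + g) h = bracket f h + bracket g h
  bracket_smul_left : ∀ (r : ℝ) f g, bracket (r • f) g = r • bracket f g
  bracket_antisymm : ∀ f g, bracket f g = - bracket g f
  bracket_leibniz : ∀ f g h, bracket f (g * h) = bracket f g * h + g * bracket f h
  bracket_jacobi : ∀ f g h,
    bracket f (bracket g h) + bracket g (bracket h f) + bracket h (bracket f g) = 0

namespace PoissonStructure

lemma bracket_zero_left (P : PoissonStructure IM M) (f : C^∞⟮IM, M; ℝ⟯) :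
    P.bracket 0 f = 0 := by
  have h := P.bracket_smul_left 0 0 f
  simpa using h

lemma bracket_add_right (P : PoissonStructure IM M) (f g h : C^∞⟮IM, M; ℝ⟯) :
    P.bracket f (g + h) = P.bracket f g + P.bracket f h := by
  rw [P.bracket_antisymm f (g + h), P.bracket_add_left,
    P.bracket_antisymm g f, P.bracket_antisymm h f]
  abel

lemma bracket_smul_right (P : PoissonStructure IM M) (r : ℝ) (f g : C^∞⟮IM, M; ℝ⟯) :
    P.bracket f (r • g) = r • P.bracket f g := by
  rw [P.bracket_antisymm f (r • g), P.bracket_smul_left, P.bracket_antisymm g f]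
  simp

lemma bracket_zero_right (P : PoissonStructure IM M) (f : C^∞⟮IM, M; ℝ⟯) :
    P.bracket f 0 = 0 := by
  rw [P.bracket_antisymm, bracket_zero_left]; simp

end PoissonStructure

variable (IM M) in
/-- A vector field, regarded as an ℝ-linear derivation of the ring of smooth functions. -/
def IsVectorField (X : C^∞⟮IM, M; ℝ⟯ → C^∞⟮IM, M; ℝ⟯) : Prop :=
  (∀ f g, X (f + g) = X f + X g) ∧ (∀ (r : ℝ) f, X (r • f) = r • X f) ∧
    (∀ f g, X (f * g) = X f * g + f * X g)

variable (IM M) in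
/-- The commutator (Lie bracket) of two vector fields. -/
def comm (X Y : C^∞⟮IM, M; ℝ⟯ → C^∞⟮IM, M; ℝ⟯) : C^∞⟮IM, M; ℝ⟯ → C^∞⟮IM, M; ℝ⟯ :=
  fun f => X (Y f) - Y (X f)

/-- The hamiltonian vector field `X_h = {h, ·}` of a smooth function `h`. -/
def PoissonStructure.ham (P : PoissonStructure IM M) (h : C^∞⟮IM, M; ℝ⟯) :
    C^∞⟮IM, M; ℝ⟯ → C^∞⟮IM, M; ℝ⟯ := P.bracket h

/-- A vector field is Poisson when it is an infinitesimal automorphism of the bracket;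
equivalently, when it is a closed 1-cochain for the Lichnerowicz differential. -/
def IsPoissonVF (P : PoissonStructure IM M) (X : C^∞⟮IM, M; ℝ⟯ → C^∞⟮IM, M; ℝ⟯) : Prop :=
  ∀ f g, X (P.bracket f g) = P.bracket (X f) g + P.bracket f (X g)

/-- A volume form on a manifold, encoded through its divergence operator on vector fields:
`div X` is characterized by `L_X μ = (div X) μ`.  The axioms are the standard properties of
the divergence operator of a volume form. -/
structure VolumeForm
    {E : Type*} [NormedAddCommGroup E] [NormedSpace ℝ E]
    {H : Type*} [TopologicalSpace H] (I : ModelWithCorners ℝ E H)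
    (M : Type*) [TopologicalSpace M] [ChartedSpace H M] : Type _ where
  div : (C^∞⟮I, M; ℝ⟯ → C^∞⟮I, M; ℝ⟯) → C^∞⟮I, M; ℝ⟯
  div_add : ∀ X Y, IsVectorField I M X → IsVectorField I M Y → div (X + Y) = div X + div Y
  div_fsmul : ∀ (f : C^∞⟮I, M; ℝ⟯) X, IsVectorField I M X → div (f • X) = f * div X + X f
  div_comm : ∀ X Y, IsVectorField I M X → IsVectorField I M Y →
    div (comm I M X Y) = X (div Y) - Y (div X)

/-- The modular vector field of a Poisson structure relative to a volume form:
`X_μ(f) = div_μ(X_f)`, i.e. it is characterized by `L_{X_f} μ = X_μ(f) • μ`. -/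
def PoissonStructure.modularVF (P : PoissonStructure IM M) (V : VolumeForm IM M) :
    C^∞⟮IM, M; ℝ⟯ → C^∞⟮IM, M; ℝ⟯ :=
  fun f => V.div (P.ham f)

/-- The pullback of smooth functions along a smooth map. -/
def pullback (φ : C^∞⟮IM, M; IN, N⟯) : C^∞⟮IN, N; ℝ⟯ → C^∞⟮IM, M; ℝ⟯ :=
  fun f => f.comp φ

/-- A smooth map between Poisson manifolds is a Poisson map if its pullback on smooth
functions preserves the Poisson brackets. -/
def IsPoissonMap (PM : PoissonStructure IM M) (PN : PoissonStructure IN N)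
    (φ : C^∞⟮IM, M; IN, N⟯) : Prop :=
  ∀ f g, pullback φ (PN.bracket f g) = PM.bracket (pullback φ f) (pullback φ g)

/-- Degree-one cochains of the Lie algebroid `φ*T*N` associated to a Poisson map
`φ : M → N`: these are the vector fields along `φ`, encoded as operators from smooth
functions on `N` to smooth functions on `M`. -/
abbrev Cochain
    {E : Type*} [NormedAddCommGroup E] [NormedSpace ℝ E]
    {H : Type*} [TopologicalSpace H] (I : ModelWithCorners ℝ E H)
    (M : Type*) [TopologicalSpace M] [ChartedSpace H M]
    {E' : Type*} [NormedAddCommGroup E'] [NormedSpace ℝ E']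
    {H' : Type*} [TopologicalSpace H'] (I' : ModelWithCorners ℝ E' H')
    (N : Type*) [TopologicalSpace N] [ChartedSpace H' N] : Type _ :=
  C^∞⟮I', N; ℝ⟯ → C^∞⟮I, M; ℝ⟯

/-- The exact 1-cochains of the Lie algebroid `φ*T*N`: those of the form
`g ↦ {g∘φ, h}_M` (i.e. `dφ·X_{-h}` for a smooth function `h` on `M`). -/
def exactSubmodule (PM : PoissonStructure IM M) (φ : C^∞⟮IM, M; IN, N⟯) :
    Submodule ℝ (Cochain IM M IN N) where
  carrier := {Y | ∃ h, ∀ g, Y g = PM.bracket (pullback φ g) h}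
  add_mem' := by
    rintro Y₁ Y₂ ⟨h₁, H₁⟩ ⟨h₂, H₂⟩
    exact ⟨h₁ + h₂, fun g => by
      simp [Pi.add_apply, H₁ g, H₂ g, PM.bracket_add_right]⟩
  zero_mem' := ⟨0, fun g => by simp [PM.bracket_zero_right]⟩
  smul_mem' := by
    rintro r Y ⟨h, H⟩
    exact ⟨r • h, fun g => by simp [Pi.smul_apply, H g, PM.bracket_smul_right]⟩

/-- The degree-one Lie algebroid cohomology of `φ*T*N`, presented as the space of
1-cochains modulo the exact ones (so that equalities between classes of closed
cochains are exactly equalities in `H¹_π(φ)`). -/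
abbrev H1 (PM : PoissonStructure IM M) (φ : C^∞⟮IM, M; IN, N⟯) : Type _ :=
  Cochain IM M IN N ⧸ exactSubmodule PM φ

/-- The cohomology class of a 1-cochain. -/
def cls (PM : PoissonStructure IM M) (φ : C^∞⟮IM, M; IN, N⟯) (Y : Cochain IM M IN N) :
    H1 PM φ :=
  Submodule.Quotient.mk Y

/-- A 1-cochain of `φ*T*N` is closed when
`{f∘φ, Y g}_M - {g∘φ, Y f}_M - Y({f,g}_N) = 0` for all smooth `f, g` on `N`. -/
def IsClosedCochain (PM : PoissonStructure IM M) (PN : PoissonStructure IN N)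
    (φ : C^∞⟮IM, M; IN, N⟯) (Y : Cochain IM M IN N) : Prop :=
  ∀ f g, PM.bracket (pullback φ f) (Y g) - PM.bracket (pullback φ g) (Y f)
      - Y (PN.bracket f g) = 0

/-- `dφ · X` : the pushforward of a vector field on `M` to a vector field along `φ`. -/
def pushSrc (φ : C^∞⟮IM, M; IN, N⟯) (X : C^∞⟮IM, M; ℝ⟯ → C^∞⟮IM, M; ℝ⟯) :
    Cochain IM M IN N :=
  fun g => X (pullback φ g)

/-- `Y ∘ φ` : the restriction along `φ` of a vector field on `N` to a vector field along `φ`. -/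
def pushTgt (φ : C^∞⟮IM, M; IN, N⟯) (Y : C^∞⟮IN, N; ℝ⟯ → C^∞⟮IN, N; ℝ⟯) :
    Cochain IM M IN N :=
  fun g => pullback φ (Y g)

/-- The modular vector field `X_{μ,ν} = dφ·X_μ - X_ν∘φ` of a Poisson map `φ` relative to
volume forms `μ` on the source and `ν` on the target. -/
def modularCochain (PM : PoissonStructure IM M) (PN : PoissonStructure IN N)
    (φ : C^∞⟮IM, M; IN, N⟯) (Vμ : VolumeForm IM M) (Vν : VolumeForm IN N) :
    Cochain IM M IN N :=
  pushSrc φ (PM.modularVF Vμ) - pushTgt φ (PN.modularVF Vν)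

/-- The exact vector fields on a Poisson manifold: the hamiltonian vector fields,
in the form `g ↦ {g, h}` (the coboundaries of the Lichnerowicz complex in degree one). -/
def exactVF (P : PoissonStructure IM M) : Submodule ℝ (C^∞⟮IM, M; ℝ⟯ → C^∞⟮IM, M; ℝ⟯) where
  carrier := {Y | ∃ h, ∀ g, Y g = P.bracket g h}
  add_mem' := by
    rintro Y₁ Y₂ ⟨h₁, H₁⟩ ⟨h₂, H₂⟩
    exact ⟨h₁ + h₂, fun g => by
      simp [Pi.add_apply, H₁ g, H₂ g, P.bracket_add_right]⟩
  zero_mem' := ⟨0, fun g => by simp [P.bracket_zero_right]⟩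
  smul_mem' := by
    rintro r Y ⟨h, H⟩
    exact ⟨r • h, fun g => by simp [Pi.smul_apply, H g, P.bracket_smul_right]⟩

/-- The first Poisson cohomology of a Poisson manifold, presented as vector fields
modulo hamiltonian vector fields. -/
abbrev H1VF (P : PoissonStructure IM M) : Type _ :=
  (C^∞⟮IM, M; ℝ⟯ → C^∞⟮IM, M; ℝ⟯) ⧸ exactVF P

/-- The Poisson cohomology class of a vector field on a Poisson manifold. -/
def clsVF (P : PoissonStructure IM M) (X : C^∞⟮IM, M; ℝ⟯ → C^∞⟮IM, M; ℝ⟯) : H1VF P :=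
  Submodule.Quotient.mk X

lemma PoissonStructure.bracket_sub_right (P : PoissonStructure IM M)
    (f g h : C^∞⟮IM, M; ℝ⟯) :
    P.bracket f (g - h) = P.bracket f g - P.bracket f h := by
  have : g - h = g + (-1 : ℝ) • h := by ext x; simp; ring
  rw [this, P.bracket_add_right, P.bracket_smul_right]
  ext x; simp; ring

lemma PoissonStructure.ham_isVectorField (P : PoissonStructure IM M) (h : C^∞⟮IM, M; ℝ⟯) :
    IsVectorField IM M (P.ham h) :=
  ⟨fun f g => P.bracket_add_right h f g, fun r f => P.bracket_smul_right r h f,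
    fun f g => P.bracket_leibniz h f g⟩

lemma PoissonStructure.bracket_neg_right (P : PoissonStructure IM M)
    (f g : C^∞⟮IM, M; ℝ⟯) :
    P.bracket f (-g) = - P.bracket f g := by
  have h1 : (-g : C^∞⟮IM, M; ℝ⟯) = (-1 : ℝ) • g := by ext x; simp
  rw [h1, P.bracket_smul_right]; ext x; simp

lemma PoissonStructure.comm_ham (P : PoissonStructure IM M) (f g : C^∞⟮IM, M; ℝ⟯) :
    comm IM M (P.ham f) (P.ham g) = P.ham (P.bracket f g) := by
  funext h
  have J := P.bracket_jacobi f g h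
  rw [P.bracket_antisymm h f, P.bracket_neg_right,
    P.bracket_antisymm h (P.bracket f g)] at J
  simp only [comm, ham]
  have h2 : P.bracket f (P.bracket g h) - P.bracket g (P.bracket f h)
      = P.bracket (P.bracket f g) h := by
    have e : P.bracket f (P.bracket g h) - P.bracket g (P.bracket f h)
        - P.bracket (P.bracket f g) h = 0 := by
      rw [sub_eq_add_neg, sub_eq_add_neg]; exact J
    exact sub_eq_zero.mp e
  exact h2

/-- The modular vector field is a Poisson vector field. -/
lemma PoissonStructure.modularVF_isPoisson (P : PoissonStructure IM M) (V : VolumeForm IM M) :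
    IsPoissonVF P (P.modularVF V) := by
  intro f g
  have hdc := V.div_comm (P.ham f) (P.ham g) (P.ham_isVectorField f) (P.ham_isVectorField g)
  rw [P.comm_ham] at hdc
  -- hdc : div (ham {f,g}) = {f, div (ham g)} - {g, div (ham f)}
  simp only [modularVF]
  rw [hdc]
  have : P.bracket g (V.div (P.ham f)) = - P.bracket (V.div (P.ham f)) g := by
    rw [P.bracket_antisymm g]
  rw [show P.ham f = P.bracket f from rfl, show P.ham g = P.bracket g from rfl] at *
  rw [this]
  abel

lemma pullback_add (φ : C^∞⟮IM, M; IN, N⟯) (f g : C^∞⟮IN, N; ℝ⟯) :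
    pullback φ (f + g) = pullback φ f + pullback φ g := rfl

/-- Let `φ : M → N` be a Poisson map between oriented Poisson manifolds and
fix volume forms `μ` on `M` and `ν` on `N`.  Then the modular class
`mod(φ) = i*mod(M) - j*mod(N) ∈ H¹_π(φ)` is represented by the vector field along `φ`
given by `X_{μ,ν} = dφ·X_μ - X_ν∘φ`, where `X_μ` and `X_ν` are the modular vector fields
of `π_M` and `π_N` relative to `μ` and `ν`: that is, `X_{μ,ν}` is a closed 1-cochain and
its class equals `i*[X_μ] - j*[X_ν]`. -/
theorem modular_class_of_Poisson_map_represented_by_modular_vector_field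
    {EM : Type*} [NormedAddCommGroup EM] [NormedSpace ℝ EM]
    {HM : Type*} [TopologicalSpace HM] {IM : ModelWithCorners ℝ EM HM}
    {M : Type*} [TopologicalSpace M] [ChartedSpace HM M]
    {EN : Type*} [NormedAddCommGroup EN] [NormedSpace ℝ EN]
    {HN : Type*} [TopologicalSpace HN] {IN : ModelWithCorners ℝ EN HN}
    {N : Type*} [TopologicalSpace N] [ChartedSpace HN N]
    (PM : PoissonStructure IM M) (PN : PoissonStructure IN N)
    (φ : C^∞⟮IM, M; IN, N⟯) (hφ : IsPoissonMap PM PN φ)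
    (Vμ : VolumeForm IM M) (Vν : VolumeForm IN N) :
    IsClosedCochain PM PN φ (modularCochain PM PN φ Vμ Vν) ∧
      cls PM φ (modularCochain PM PN φ Vμ Vν) =
        cls PM φ (pushSrc φ (PM.modularVF Vμ)) - cls PM φ (pushTgt φ (PN.modularVF Vν)) := by
  constructor
  · intro f g
    set a := pullback φ f with ha
    set b := pullback φ g with hb
    set Xμ := PM.modularVF Vμ with hXμ
    set Xν := PN.modularVF Vν with hXν
    have hYg : modularCochain PM PN φ Vμ Vν g = Xμ b - pullback φ (Xν g) := rfl
    have hYf : modularCochain PM PN φ Vμ Vν f = Xμ a - pullback φ (Xν f) := rfl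
    have hYbr : modularCochain PM PN φ Vμ Vν (PN.bracket f g)
        = Xμ (PM.bracket a b) - pullback φ (Xν (PN.bracket f g)) := by
      simp only [modularCochain, Pi.sub_apply, pushSrc, pushTgt, hφ f g, ha, hb]
      rfl
    have hPν : Xν (PN.bracket f g) = PN.bracket (Xν f) g + PN.bracket f (Xν g) :=
      PN.modularVF_isPoisson Vν f g
    have hPμ : Xμ (PM.bracket a b) = PM.bracket (Xμ a) b + PM.bracket a (Xμ b) :=
      PM.modularVF_isPoisson Vμ a b
    rw [hYg, hYf, hYbr, hPν, hPμ, pullback_add, hφ (Xν f) g, hφ f (Xν g),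
      PM.bracket_sub_right a, PM.bracket_sub_right b]
    rw [PM.bracket_antisymm b (Xμ a), PM.bracket_antisymm b (pullback φ (Xν f))]
    abel
  · simp only [cls, modularCochain]
    rw [← Submodule.Quotient.mk_sub]

end PoissonPaper
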